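/- Let A and B be complete lattices with A complete-prime algebraic and B complete-prime algebraic, and consider the lattice of monotone functions A → B ordered pointwise. For every d ∈ A and complete prime p of B, the function f_{d,p} defined by f_{d,p}(x) = p if d ≤ x and f_{d,p}(x) = ⊥ otherwise is a complete prime of the function lattice, and every monotone function is the supremum of the complete primes below it (so the function lattice is complete-prime algebraic). -/

import Mathlib

def CompletePrime {A : Type*} [CompleteLattice A] (p : A) : Prop :=
  p ≠ ⊥ ∧ ∀ U : Set A, p ≤ sSup U → ∃ x ∈ U, p ≤ x

open Classical in
/-- The step function `f_{d,p}`: `x ↦ p` if `d ≤ x`, and `⊥` otherwise. -/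
noncomputable def primeFun {A B : Type*} [Preorder A] [CompleteLattice B]
    (d : A) (p : B) : A →o B :=
  ⟨fun x => if d ≤ x then p else ⊥, by
    intro x y hxy
    dsimp only
    by_cases h : d ≤ x
    · rw [if_pos h, if_pos (h.trans hxy)]
    · rw [if_neg h]; exact bot_le⟩

open Classical in
lemma primeFun_apply {A B : Type*} [Preorder A] [CompleteLattice B]
    (d : A) (p : B) (x : A) : primeFun d p x = if d ≤ x then p else ⊥ := rfl

lemma primeFun_apply_self {A B : Type*} [Preorder A] [CompleteLattice B]
    (d : A) (p : B) : primeFun d p d = p := by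
  simp [primeFun_apply]

lemma primeFun_prime {A B : Type*} [Preorder A] [CompleteLattice B]
    (d : A) (p : B) (hp : CompletePrime p) : CompletePrime (primeFun d p) := by
  constructor
  · intro h
    apply hp.1
    have := congrArg (fun f : A →o B => f d) h
    simpa [primeFun_apply] using this
  · intro U hU
    have hd : p ≤ sSup ((fun f : A →o B => f d) '' U) := by
      have : primeFun d p d ≤ sSup U d := hU d
      rw [OrderHom.sSup_apply] at this
      simpa [primeFun_apply, sSup_image] using this
    obtain ⟨y, ⟨f, hf, rfl⟩, hpy⟩ := hp.2 _ hd
    refine ⟨f, hf, fun x => ?_⟩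
    by_cases h : d ≤ x
    · simpa [primeFun_apply, h] using hpy.trans (f.mono h)
    · simp [primeFun_apply, h]

theorem stmt5 {A B : Type*} [CompleteLattice A] [CompleteLattice B]
    (hA : ∀ x : A, x = sSup {p | CompletePrime p ∧ p ≤ x})
    (hB : ∀ x : B, x = sSup {p | CompletePrime p ∧ p ≤ x}) :
    (∀ (d : A) (p : B), CompletePrime p → CompletePrime (primeFun d p)) ∧
    (∀ g : A →o B, g = sSup {h : A →o B | CompletePrime h ∧ h ≤ g}) := by
  refine ⟨fun d p hp => primeFun_prime d p hp, fun g => ?_⟩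
  apply le_antisymm
  · intro x
    show g x ≤ sSup {h : A →o B | CompletePrime h ∧ h ≤ g} x
    rw [OrderHom.sSup_apply]
    calc g x = sSup {p | CompletePrime p ∧ p ≤ g x} := hB (g x)
      _ ≤ _ := by
        apply sSup_le
        rintro p ⟨hp, hpg⟩
        have hle : primeFun x p ≤ g := by
          intro y
          by_cases h : x ≤ y
          · simpa [primeFun_apply, h] using hpg.trans (g.mono h)
          · simp [primeFun_apply, h]
        have : p ≤ primeFun x p x := by simp [primeFun_apply]
        exact this.trans (le_iSup₂_of_le (primeFun x p) ⟨primeFun_prime x p hp, hle⟩ le_rfl)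
  · exact sSup_le fun h hh => hh.2
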